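/- Let Δ = diag(d₁,d₂,d₃) with d₁,d₂,d₃ > 0 pairwise distinct. Then the set of P ∈ SO(3) satisfying ΔP = PᵀΔ is exactly {I, diag(1,−1,−1), diag(−1,1,−1), diag(−1,−1,1)}. -/

import Mathlib

open Matrix

/-- `SO(3)`. -/
def SO3 (R : Matrix (Fin 3) (Fin 3) ℝ) : Prop :=
  Rᵀ * R = 1 ∧ R.det = 1

/-- for `Δ = diag(d₁,d₂,d₃)` with pairwise distinct positive entries,
the set of `P ∈ SO(3)` with `ΔP = PᵀΔ` is exactly
`{I, diag(1,−1,−1), diag(−1,1,−1), diag(−1,−1,1)}`. -/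
theorem critical_set_diagonal (d : Fin 3 → ℝ) (hd : ∀ i, 0 < d i)
    (hdist : ∀ i j, i ≠ j → d i ≠ d j) (P : Matrix (Fin 3) (Fin 3) ℝ) :
    (SO3 P ∧ Matrix.diagonal d * P = Pᵀ * Matrix.diagonal d) ↔
      (P = 1 ∨ P = Matrix.diagonal ![1, -1, -1] ∨
       P = Matrix.diagonal ![-1, 1, -1] ∨ P = Matrix.diagonal ![-1, -1, 1]) := by
  constructor
  · rintro ⟨⟨hO, hdet⟩, h1⟩
    have hPPt : P * Pᵀ = 1 := by
      rw [mul_eq_one_comm] at hO; exact hO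
    have h2 : P * Matrix.diagonal d = Matrix.diagonal d * Pᵀ := by
      calc P * Matrix.diagonal d = P * (Matrix.diagonal d * P) * Pᵀ := by
            rw [Matrix.mul_assoc, Matrix.mul_assoc, hPPt, Matrix.mul_one]
        _ = P * (Pᵀ * Matrix.diagonal d) * Pᵀ := by rw [h1]
        _ = Matrix.diagonal d * Pᵀ := by
            rw [← Matrix.mul_assoc, hPPt, Matrix.one_mul]
    have key : ∀ i j, d i * P i j = P j i * d j := by
      intro i j
      have := congrFun (congrFun h1 i) j
      simpa [Matrix.diagonal_mul, Matrix.mul_diagonal, Matrix.transpose_apply] using this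
    have key2 : ∀ i j, P i j * d j = d i * P j i := by
      intro i j
      have := congrFun (congrFun h2 i) j
      simpa [Matrix.diagonal_mul, Matrix.mul_diagonal, Matrix.transpose_apply] using this
    have hoff : ∀ i j, i ≠ j → P i j = 0 := by
      intro i j hij
      have e1 := key i j
      have e2 := key2 i j
      have hdij := hdist i j hij
      have hi := hd i
      have hj := hd j
      have hz : P i j * (d j * d j - d i * d i) = 0 := by nlinarith [e1, e2]
      have hne : d j * d j - d i * d i ≠ 0 := by
        rcases lt_or_gt_of_ne hdij with h | h <;> nlinarith
      exact (mul_eq_zero.mp hz).resolve_right hne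
    have h01 : P 0 1 = 0 := hoff 0 1 (by decide)
    have h02 : P 0 2 = 0 := hoff 0 2 (by decide)
    have h10 : P 1 0 = 0 := hoff 1 0 (by decide)
    have h12 : P 1 2 = 0 := hoff 1 2 (by decide)
    have h20 : P 2 0 = 0 := hoff 2 0 (by decide)
    have h21 : P 2 1 = 0 := hoff 2 1 (by decide)
    have hsq : ∀ i : Fin 3, P i i * P i i = 1 := by
      intro i
      have := congrFun (congrFun hO i) i
      fin_cases i <;>
        simpa [Matrix.mul_apply, Fin.sum_univ_three, Matrix.transpose_apply,
          Matrix.one_apply, h01, h02, h10, h12, h20, h21] using this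
    have hdet3 : P 0 0 * P 1 1 * P 2 2 = 1 := by
      rw [Matrix.det_fin_three] at hdet
      rw [h01, h02, h10, h12, h20, h21] at hdet
      linarith [hdet]
    have s0 := mul_self_eq_one_iff.mp (hsq 0)
    have s1 := mul_self_eq_one_iff.mp (hsq 1)
    have s2 := mul_self_eq_one_iff.mp (hsq 2)
    rcases s0 with a0 | a0 <;> rcases s1 with a1 | a1 <;> rcases s2 with a2 | a2 <;>
      rw [a0, a1, a2] at hdet3 <;> try norm_num at hdet3
    · left
      ext i j
      fin_cases i <;> fin_cases j <;>
        simp [h01, h02, h10, h12, h20, h21, a0, a1, a2, Matrix.one_apply]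
    · right; left
      ext i j
      fin_cases i <;> fin_cases j <;>
        simp [h01, h02, h10, h12, h20, h21, a0, a1, a2, Matrix.diagonal]
    · right; right; left
      ext i j
      fin_cases i <;> fin_cases j <;>
        simp [h01, h02, h10, h12, h20, h21, a0, a1, a2, Matrix.diagonal]
    · right; right; right
      ext i j
      fin_cases i <;> fin_cases j <;>
        simp [h01, h02, h10, h12, h20, h21, a0, a1, a2, Matrix.diagonal]
  · rintro (rfl | rfl | rfl | rfl)
    · refine ⟨⟨by simp, by simp⟩, by simp⟩
    all_goals
      refine ⟨⟨?_, ?_⟩, ?_⟩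
      · rw [Matrix.diagonal_transpose, Matrix.diagonal_mul_diagonal]
        ext i j
        fin_cases i <;> fin_cases j <;>
          simp [Matrix.diagonal, Matrix.one_apply]
      · rw [Matrix.det_diagonal, Fin.prod_univ_three]; norm_num [Matrix.cons_val_two, Matrix.vecHead, Matrix.vecTail]
      · rw [Matrix.diagonal_transpose, Matrix.diagonal_mul_diagonal,
          Matrix.diagonal_mul_diagonal]
        exact congrArg Matrix.diagonal (funext fun i => mul_comm _ _)
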